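/- For a positive integer q and integer p coprime to q, s(p, q) = (1/(4q)) · ∑_{i=1}^{q−1} cot(πi/q)·cot(πpi/q). -/

import Mathlib

open Complex Finset

lemma sum_pow_eq_zero {q : ℕ} {z : ℂ} (hz : z ^ q = 1) (h1 : z ≠ 1) :
    ∑ a ∈ range q, z ^ a = 0 := by
  rw [geom_sum_eq h1, hz, sub_self, zero_div]

lemma sum_mul_pow_eq {q : ℕ} {z : ℂ} (hz : z ^ q = 1) (h1 : z ≠ 1) :
    ∑ a ∈ range q, (a : ℂ) * z ^ a = q / (z - 1) := by
  have key : ∀ n : ℕ, (z - 1) * ∑ a ∈ range n, (a : ℂ) * z ^ a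
      = n * z ^ n - (∑ a ∈ range n, z ^ a) - z ^ n + 1 := by
    intro n
    induction n with
    | zero => simp
    | succ n ih =>
      rw [sum_range_succ, sum_range_succ, mul_add, ih]
      push_cast
      ring
  have h0 : (z - 1) ≠ 0 := sub_ne_zero.mpr h1
  field_simp
  rw [mul_comm, key q, hz, sum_pow_eq_zero hz h1]
  ring

lemma inv_exp_sub (θ : ℝ) (h : Real.sin θ ≠ 0) :
    ((Complex.exp (2 * θ * I) - 1))⁻¹ = -1/2 - (Real.cot θ / 2) * I := by
  have hs : (Real.sin θ : ℂ) ≠ 0 := Complex.ofReal_ne_zero.mpr h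
  have hexp : Complex.exp (2 * θ * I) - 1
      = 2 * Real.sin θ * I * Complex.exp (θ * I) := by
    rw [show (2:ℂ) * θ * I = θ * I + θ * I by ring, Complex.exp_add, Complex.exp_mul_I]
    push_cast
    linear_combination Complex.sin_sq_add_cos_sq (θ:ℂ) - (Complex.sin (θ:ℂ))^2 * Complex.I_sq
  rw [hexp]
  apply inv_eq_of_mul_eq_one_left
  rw [Real.cot_eq_cos_div_sin, Complex.exp_mul_I]
  push_cast
  push_cast at hs
  field_simp
  linear_combination Complex.sin_sq_add_cos_sq (θ:ℂ) + (-(Complex.sin (θ:ℂ)^2 + Complex.cos (θ:ℂ)^2) - Complex.sin (θ:ℂ) * Complex.cos (θ:ℂ) * I) * Complex.I_sq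

open Real in
lemma cot_fourier {n : ℕ} (hn : 0 < n) {m : ℤ} (hm : ¬ (n:ℤ) ∣ m) :
    ∑ a ∈ range n, ((a:ℝ)/n - 1/2) * Real.sin (2*π*m*a/n)
      = -(Real.cot (π*m/n))/2 := by
  have hn0 : (n:ℝ) ≠ 0 := Nat.cast_ne_zero.mpr hn.ne'
  have hnc : (n:ℂ) ≠ 0 := Nat.cast_ne_zero.mpr hn.ne'
  have hπ : (π:ℝ) ≠ 0 := Real.pi_ne_zero
  set z : ℂ := Complex.exp ((2*π*m/n : ℝ) * I) with hzdef
  have hzn : z ^ n = 1 := by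
    rw [hzdef, ← Complex.exp_nat_mul]
    have heq : (n:ℂ) * (((2*π*m/n : ℝ):ℂ) * I) = (m:ℂ) * (2 * π * I) := by
      push_cast
      field_simp
    rw [heq, Complex.exp_int_mul_two_pi_mul_I]
  have hz1 : z ≠ 1 := by
    intro hcontr
    rw [hzdef, Complex.exp_eq_one_iff] at hcontr
    rcases hcontr with ⟨k, hk⟩
    apply hm ⟨k, ?_⟩
    have h2 : ((2*π*m/n : ℝ) : ℂ) = (k:ℂ) * (2*π) := by
      have hk' : ((2*π*m/n : ℝ) : ℂ) * I = ((k:ℂ) * (2*π)) * I := by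
        rw [hk]; push_cast; ring
      exact mul_right_cancel₀ I_ne_zero hk'
    have h2' : (2*π*m/n : ℝ) = (k:ℝ) * (2*π) := by exact_mod_cast h2
    have h3 : (2*π) * (m:ℝ) = (2*π) * ((n:ℝ)*k) := by
      field_simp at h2'
      rw [h2']
    have := mul_left_cancel₀ (by positivity : (2*π:ℝ) ≠ 0) h3
    exact_mod_cast this
  have hsin : Real.sin (π*m/n) ≠ 0 := by
    intro h0
    rw [Real.sin_eq_zero_iff] at h0
    rcases h0 with ⟨k, hk⟩
    apply hm ⟨k, ?_⟩
    have h3 : (π:ℝ) * (m:ℝ) = (π:ℝ) * ((n:ℝ)*k) := by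
      field_simp at hk
      rw [← hk]; ring
    have := mul_left_cancel₀ hπ h3
    exact_mod_cast this
  have hsum : ∑ a ∈ range n, (((a:ℝ)/n - 1/2 : ℝ) : ℂ) * z ^ a
      = -1/2 - (Real.cot (π*m/n) / 2) * I := by
    have e1 : ∑ a ∈ range n, (((a:ℝ)/n - 1/2 : ℝ) : ℂ) * z ^ a
        = (1/(n:ℂ)) * (∑ a ∈ range n, (a:ℂ) * z ^ a) - (1/2) * ∑ a ∈ range n, z ^ a := by
      rw [Finset.mul_sum, Finset.mul_sum, ← Finset.sum_sub_distrib]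
      apply Finset.sum_congr rfl
      intro a _
      push_cast
      ring
    rw [e1, sum_pow_eq_zero hzn hz1, sum_mul_pow_eq hzn hz1]
    rw [mul_zero, sub_zero, show (1/(n:ℂ)) * ((n:ℂ)/(z-1)) = (z-1)⁻¹ by field_simp]
    have := inv_exp_sub (π*m/n) hsin
    rw [show ((2:ℂ) * ((π*m/n : ℝ):ℂ) * I) = ((2*π*m/n : ℝ) : ℂ) * I by push_cast; ring] at this
    rw [← hzdef] at this
    exact this
  have him := congrArg Complex.im hsum
  rw [Complex.im_sum] at him
  have e2 : ∀ a ∈ range n, ((((a:ℝ)/n - 1/2 : ℝ) : ℂ) * z ^ a).im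
      = ((a:ℝ)/n - 1/2) * Real.sin (2*π*m*a/n) := by
    intro a _
    have hza : z ^ a = Complex.exp (((2*π*m*a/n : ℝ)) * I) := by
      rw [hzdef, ← Complex.exp_nat_mul]
      congr 1
      push_cast
      ring
    rw [hza, Complex.mul_im, Complex.ofReal_re, Complex.ofReal_im,
      Complex.exp_ofReal_mul_I_im, zero_mul, add_zero]
  rw [Finset.sum_congr rfl e2] at him
  rw [him, Complex.sub_im, Complex.mul_im, Complex.I_im, Complex.I_re,
    show ((Real.cot (π*↑m/↑n) : ℂ)/2) = ((Real.cot (π*↑m/↑n)/2 : ℝ) : ℂ) by push_cast; ring,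
    Complex.ofReal_re, Complex.ofReal_im]
  norm_num
  ring

open Real in
lemma sum_cos_eq {n : ℕ} (hn : 0 < n) (m : ℤ) :
    ∑ k ∈ range n, Real.cos (2*π*m*k/n) = if (n:ℤ) ∣ m then (n:ℝ) else 0 := by
  have hn0 : (n:ℝ) ≠ 0 := Nat.cast_ne_zero.mpr hn.ne'
  by_cases hd : (n:ℤ) ∣ m
  · rw [if_pos hd]
    rcases hd with ⟨t, rfl⟩
    have h1 : ∀ k ∈ range n, Real.cos (2*π*(((n:ℤ)*t : ℤ):ℝ)*k/n) = 1 := by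
      intro k _
      have he : (2*π*(((n:ℤ)*t : ℤ):ℝ)*k/n) = ((t*k : ℤ):ℝ)*(2*π) := by
        push_cast; field_simp
      rw [he, Real.cos_int_mul_two_pi]
    rw [Finset.sum_congr rfl h1, Finset.sum_const, card_range, nsmul_eq_mul, mul_one]
  · rw [if_neg hd]
    have hnc : (n:ℂ) ≠ 0 := Nat.cast_ne_zero.mpr hn.ne'
    set z : ℂ := Complex.exp ((2*π*m/n : ℝ) * I) with hzdef
    have hzn : z ^ n = 1 := by
      rw [hzdef, ← Complex.exp_nat_mul]
      have heq : (n:ℂ) * (((2*π*m/n : ℝ):ℂ) * I) = (m:ℂ) * (2 * π * I) := by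
        push_cast
        field_simp
      rw [heq, Complex.exp_int_mul_two_pi_mul_I]
    have hz1 : z ≠ 1 := by
      intro hcontr
      rw [hzdef, Complex.exp_eq_one_iff] at hcontr
      rcases hcontr with ⟨k, hk⟩
      apply hd ⟨k, ?_⟩
      have h2 : ((2*π*m/n : ℝ) : ℂ) = (k:ℂ) * (2*π) := by
        have hk' : ((2*π*m/n : ℝ) : ℂ) * I = ((k:ℂ) * (2*π)) * I := by
          rw [hk]; push_cast; ring
        exact mul_right_cancel₀ I_ne_zero hk'
      have h2' : (2*π*m/n : ℝ) = (k:ℝ) * (2*π) := by exact_mod_cast h2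
      have h3 : (2*π) * (m:ℝ) = (2*π) * ((n:ℝ)*k) := by
        field_simp at h2'
        rw [h2']
      have := mul_left_cancel₀ (by positivity : (2*π:ℝ) ≠ 0) h3
      exact_mod_cast this
    have hre := congrArg Complex.re (sum_pow_eq_zero hzn hz1)
    rw [Complex.re_sum] at hre
    rw [show (0:ℂ).re = 0 from rfl] at hre
    rw [← hre]
    apply Finset.sum_congr rfl
    intro k _
    have hzk : z ^ k = Complex.exp (((2*π*m*k/n : ℝ)) * I) := by
      rw [hzdef, ← Complex.exp_nat_mul]
      congr 1
      push_cast
      ring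
    rw [hzk, Complex.exp_ofReal_mul_I_re]

open Real in
lemma sum_sin_mul_sin {n : ℕ} (hn : 0 < n) (a b : ℤ) :
    ∑ k ∈ range n, Real.sin (2*π*a*k/n) * Real.sin (2*π*b*k/n)
      = ((if (n:ℤ) ∣ (a - b) then (n:ℝ) else 0) - (if (n:ℤ) ∣ (a + b) then (n:ℝ) else 0))/2 := by
  have hn0 : (n:ℝ) ≠ 0 := Nat.cast_ne_zero.mpr hn.ne'
  have h1 : ∀ k ∈ range n, Real.sin (2*π*a*k/n) * Real.sin (2*π*b*k/n)
      = (Real.cos (2*π*((a:ℝ)-(b:ℝ))*k/n) - Real.cos (2*π*((a:ℝ)+(b:ℝ))*k/n))/2 := by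
    intro k _
    have e1 : (2*π*((a:ℝ)-(b:ℝ))*k/n) = 2*π*a*k/n - 2*π*b*k/n := by field_simp
    have e2 : (2*π*((a:ℝ)+(b:ℝ))*k/n) = 2*π*a*k/n + 2*π*b*k/n := by field_simp
    rw [e1, e2, Real.cos_sub, Real.cos_add]
    ring
  have hc1 := sum_cos_eq hn (a-b)
  have hc2 := sum_cos_eq hn (a+b)
  push_cast at hc1 hc2
  rw [Finset.sum_congr rfl h1, ← Finset.sum_div, Finset.sum_sub_distrib, hc1, hc2]

/-- The sawtooth function `((x))`: zero on integers, else `x - ⌊x⌋ - 1/2`. -/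
def saw (x : ℚ) : ℚ := if x = ⌊x⌋ then 0 else x - ⌊x⌋ - 1/2

/-- The Dedekind sum `s(p,q) = ∑_{i=1}^{|q|} ((i/q)) ((p i/q))`. -/
noncomputable def dedekindSum (p q : ℤ) : ℚ :=
  ∑ i ∈ Finset.Icc (1 : ℤ) |q|, saw ((i : ℚ) / (q : ℚ)) * saw ((p : ℚ) * (i : ℚ) / (q : ℚ))

lemma saw_eq (x : ℚ) : saw x = if Int.fract x = 0 then 0 else Int.fract x - 1/2 := by
  unfold saw Int.fract
  by_cases h : x = ⌊x⌋
  · rw [if_pos h, if_pos (by rw [← h]; ring)]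
  · rw [if_neg h, if_neg (by intro h'; apply h; linarith)]

lemma saw_add_int (x : ℚ) (n : ℤ) : saw (x + n) = saw x := by
  rw [saw_eq, saw_eq, Int.fract_add_intCast]

lemma saw_neg (x : ℚ) : saw (-x) = - saw x := by
  rw [saw_eq, saw_eq]
  by_cases h : Int.fract x = 0
  · rw [if_pos (Int.fract_neg_eq_zero.mpr h), if_pos h, neg_zero]
  · rw [Int.fract_neg h, if_neg h,
      if_neg (by intro h'; apply h; linarith [Int.fract_lt_one x, Int.fract_nonneg x])]
    ring

/-- `((m/q))` as a real number. -/
noncomputable def sawR (q m : ℤ) : ℝ := ((saw ((m:ℚ)/(q:ℚ)) : ℚ) : ℝ)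

lemma sawR_zero (q : ℤ) : sawR q 0 = 0 := by
  unfold sawR
  norm_num [saw_eq]

lemma sawR_period {q : ℤ} (hq : 0 < q) {a b : ℤ} (hd : q ∣ (a - b)) :
    sawR q a = sawR q b := by
  rcases hd with ⟨t, ht⟩
  have hq0 : (q:ℚ) ≠ 0 := Int.cast_ne_zero.mpr hq.ne'
  unfold sawR
  have : (a:ℚ)/(q:ℚ) = (b:ℚ)/(q:ℚ) + (t:ℤ) := by
    have ha : (a:ℚ) = (b:ℚ) + (q:ℚ)*(t:ℚ) := by
      have : a = b + q*t := by linarith [ht]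
      rw [this]; push_cast; ring
    rw [ha]; field_simp
  rw [this, saw_add_int]

lemma sawR_neg (q m : ℤ) : sawR q (-m) = - sawR q m := by
  unfold sawR
  rw [show ((-m:ℤ):ℚ)/(q:ℚ) = -((m:ℚ)/(q:ℚ)) by push_cast; ring, saw_neg]
  push_cast
  ring

lemma sawR_val {q : ℤ} (hq : 0 < q) {a : ℤ} (h1 : 1 ≤ a) (h2 : a < q) :
    sawR q a = (a:ℝ)/(q:ℝ) - 1/2 := by
  have hq0 : (q:ℚ) ≠ 0 := Int.cast_ne_zero.mpr hq.ne'
  have hqQ : (0:ℚ) < (q:ℚ) := by exact_mod_cast hq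
  have haQ : (1:ℚ) ≤ (a:ℚ) := by exact_mod_cast h1
  have hfr : Int.fract ((a:ℚ)/(q:ℚ)) = (a:ℚ)/(q:ℚ) := by
    apply Int.fract_eq_self.mpr
    constructor
    · positivity
    · rw [div_lt_one hqQ]
      exact_mod_cast h2
  have hne : ((a:ℚ)/(q:ℚ)) ≠ 0 := by positivity
  unfold sawR
  rw [saw_eq, hfr, if_neg hne]
  push_cast
  ring

open Real in
lemma cot_expand {q : ℤ} (hq : 0 < q) {m : ℤ} (hm : ¬ q ∣ m) :
    ∑ a ∈ range q.toNat, sawR q a * Real.sin (2*π*(m:ℝ)*(a:ℝ)/(q:ℝ))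
      = -(Real.cot (π*m/q))/2 := by
  have hn : 0 < q.toNat := by omega
  have hnq : ((q.toNat:ℕ):ℤ) = q := Int.toNat_of_nonneg hq.le
  have hnR : ((q.toNat:ℕ):ℝ) = (q:ℝ) := by exact_mod_cast congrArg Int.cast hnq
  have hm' : ¬ ((q.toNat:ℕ):ℤ) ∣ m := by rwa [hnq]
  have key := cot_fourier hn hm'
  rw [hnR] at key
  rw [← key]
  apply Finset.sum_congr rfl
  intro a ha
  rcases Nat.eq_zero_or_pos a with rfl | hapos
  · norm_num [sawR_zero]
  · rw [sawR_val hq (by exact_mod_cast hapos)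
      (by rw [← hnq]; exact_mod_cast Finset.mem_range.mp ha)]
    push_cast
    ring

lemma sift {q : ℤ} (hq : 0 < q) (m : ℤ) :
    ∑ a ∈ range q.toNat, sawR q a * (if q ∣ ((a:ℤ) - m) then (q:ℝ) else 0)
      = (q:ℝ) * sawR q m := by
  have h0le : 0 ≤ m % q := Int.emod_nonneg m hq.ne'
  have hlt : m % q < q := Int.emod_lt_of_pos m hq
  have hmem : (m % q).toNat ∈ range q.toNat := by
    rw [Finset.mem_range]
    omega
  have hdvd0 : q ∣ (((m % q).toNat : ℤ) - m) := by
    refine ⟨-(m/q), ?_⟩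
    have h1 : ((m % q).toNat : ℤ) = m % q := Int.toNat_of_nonneg h0le
    have h2 := Int.mul_ediv_add_emod m q
    rw [h1]
    linarith
  rw [Finset.sum_eq_single_of_mem ((m % q).toNat) hmem]
  · rw [if_pos hdvd0, sawR_period hq hdvd0, mul_comm]
  · intro b hb hne
    have hblt : (b:ℤ) < q := by
      have := Finset.mem_range.mp hb
      omega
    rw [if_neg, mul_zero]
    intro hd
    apply hne
    have hmod : (b:ℤ) % q = m % q := by
      rw [Int.emod_eq_emod_iff_emod_sub_eq_zero]
      exact Int.emod_eq_zero_of_dvd hd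
    have hself : (b:ℤ) % q = (b:ℤ) := Int.emod_eq_of_lt (by positivity) hblt
    omega

lemma sum_Icc_zero (n : ℕ) (f : ℤ → ℝ) :
    ∑ i ∈ Finset.Icc (0:ℤ) ((n:ℤ)-1), f i = ∑ k ∈ Finset.range n, f k := by
  induction n with
  | zero => simp
  | succ n ih =>
    have hins : Finset.Icc (0:ℤ) (((n+1:ℕ):ℤ)-1) = insert (n:ℤ) (Finset.Icc 0 ((n:ℤ)-1)) := by
      ext x
      simp only [Finset.mem_Icc, Finset.mem_insert]
      omega
    rw [Finset.sum_range_succ, ← ih, hins,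
      Finset.sum_insert (by simp only [Finset.mem_Icc]; omega), add_comm]

lemma sum_Icc_one (n : ℕ) (f : ℤ → ℝ) (h0 : f 0 = 0) :
    ∑ i ∈ Finset.Icc (1:ℤ) ((n:ℤ)-1), f i = ∑ k ∈ Finset.range n, f k := by
  rcases Nat.eq_zero_or_pos n with rfl | hn
  · simp
  · have hins : Finset.Icc (0:ℤ) ((n:ℤ)-1) = insert 0 (Finset.Icc 1 ((n:ℤ)-1)) := by
      ext x
      simp only [Finset.mem_Icc, Finset.mem_insert]
      omega
    rw [← sum_Icc_zero, hins, Finset.sum_insert (by simp), h0, zero_add]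

open Real in
theorem dedekind_sum_eq_cot_sum (p q : ℤ) (hq : 0 < q) (h : Int.gcd p q = 1) :
    ((dedekindSum p q : ℚ) : ℝ) =
      1 / (4 * (q : ℝ)) * ∑ i ∈ Finset.Icc (1 : ℤ) (q - 1),
        Real.cot (π * (i : ℝ) / (q : ℝ)) * Real.cot (π * (p : ℝ) * (i : ℝ) / (q : ℝ)) := by
  have hn : 0 < q.toNat := by omega
  have hnq : ((q.toNat:ℕ):ℤ) = q := Int.toNat_of_nonneg hq.le
  have hnR : ((q.toNat:ℕ):ℝ) = (q:ℝ) := by exact_mod_cast congrArg Int.cast hnq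
  have hqR : (0:ℝ) < (q:ℝ) := by exact_mod_cast hq
  have hq0 : (q:ℝ) ≠ 0 := hqR.ne'
  have hcop : IsCoprime (q:ℤ) p := by
    rw [Int.isCoprime_iff_gcd_eq_one, Int.gcd_comm]
    exact h
  -- Step A : LHS as a range sum
  have hLHS : ((dedekindSum p q : ℚ) : ℝ)
      = ∑ b ∈ Finset.range q.toNat, sawR q b * sawR q (p*b) := by
    have hargs : ∀ i:ℤ, (p:ℚ)*(i:ℚ)/(q:ℚ) = ((p*i : ℤ):ℚ)/(q:ℚ) := fun i => by
      push_cast; ring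
    have e0 : ((dedekindSum p q : ℚ) : ℝ)
        = ∑ i ∈ Finset.Icc (1:ℤ) q, sawR q i * sawR q (p*i) := by
      unfold dedekindSum
      rw [abs_of_pos hq, Rat.cast_sum]
      unfold sawR
      apply Finset.sum_congr rfl
      intro i _
      rw [hargs i, Rat.cast_mul]
    have hq_term : sawR q q * sawR q (p*q) = 0 := by
      rw [show sawR q q = sawR q 0 from sawR_period hq ⟨1, by ring⟩, sawR_zero, zero_mul]
    have hsplit : Finset.Icc (1:ℤ) q = insert q (Finset.Icc 1 (q-1)) := by
      ext x
      simp only [Finset.mem_Icc, Finset.mem_insert]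
      omega
    rw [e0, hsplit, Finset.sum_insert (by simp only [Finset.mem_Icc]; omega), hq_term,
      zero_add, show (q:ℤ) - 1 = ((q.toNat:ℕ):ℤ) - 1 by rw [hnq]]
    exact sum_Icc_one q.toNat (fun i => sawR q i * sawR q (p*i))
      (by show sawR q 0 * sawR q (p*0) = 0; rw [sawR_zero, zero_mul])
  -- the double-sum expression
  set G : ℤ → ℝ := fun k =>
    (∑ a ∈ Finset.range q.toNat, sawR q a * Real.sin (2*π*(k:ℝ)*(a:ℝ)/(q:ℝ))) *
    (∑ b ∈ Finset.range q.toNat, sawR q b * Real.sin (2*π*((p*k:ℤ):ℝ)*(b:ℝ)/(q:ℝ))) with hGdef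
  -- Step B : per-k cotangent value
  have hcot : ∀ k:ℤ, 1 ≤ k → k < q →
      Real.cot (π*(k:ℝ)/q) * Real.cot (π*(p:ℝ)*(k:ℝ)/q) = 4 * G k := by
    intro k h1 h2
    have hndvd : ¬ q ∣ k := by
      intro hd
      have := Int.le_of_dvd (by omega) hd
      omega
    have hndvd2 : ¬ q ∣ p*k := by
      intro hd
      exact hndvd (hcop.dvd_of_dvd_mul_left hd)
    rw [hGdef]
    simp only
    rw [cot_expand hq hndvd, cot_expand hq hndvd2,
      show (π*((p*k:ℤ):ℝ)/q) = π*(p:ℝ)*(k:ℝ)/q by push_cast; ring]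
    ring
  -- Step C : RHS sum over Icc = 4 * sum over range of G
  have hC : ∑ i ∈ Finset.Icc (1:ℤ) (q-1),
        Real.cot (π*(i:ℝ)/q) * Real.cot (π*(p:ℝ)*(i:ℝ)/q)
      = ∑ k ∈ Finset.range q.toNat, 4 * G k := by
    have hG0 : (4:ℝ) * G 0 = 0 := by
      rw [hGdef]
      simp only
      have : ∀ a ∈ Finset.range q.toNat,
          sawR q a * Real.sin (2*π*((0:ℤ):ℝ)*(a:ℝ)/(q:ℝ)) = 0 := by
        intro a _
        norm_num
      rw [Finset.sum_congr rfl this, Finset.sum_const_zero, zero_mul, mul_zero]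
    rw [show (q:ℤ) - 1 = ((q.toNat:ℕ):ℤ) - 1 by rw [hnq],
      ← sum_Icc_one q.toNat (fun k => 4 * G k) hG0]
    apply Finset.sum_congr rfl
    intro i hi
    have hmem := Finset.mem_Icc.mp hi
    exact hcot i hmem.1 (by omega)
  -- Step D : sum of G equals q * (dedekind-type sum)
  have hD : ∑ k ∈ Finset.range q.toNat, G ((k:ℕ):ℤ)
      = (q:ℝ) * ∑ b ∈ Finset.range q.toNat, sawR q b * sawR q (p*b) := by
    have e1 : ∀ k ∈ Finset.range q.toNat, G ((k:ℕ):ℤ)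
        = ∑ a ∈ Finset.range q.toNat, ∑ b ∈ Finset.range q.toNat,
            sawR q a * sawR q b *
              (Real.sin (2*π*((a:ℕ):ℝ)*(k:ℝ)/(q:ℝ)) * Real.sin (2*π*((p*(b:ℕ):ℤ):ℝ)*(k:ℝ)/(q:ℝ))) := by
      intro k _
      rw [hGdef]
      simp only
      rw [Finset.sum_mul_sum]
      apply Finset.sum_congr rfl
      intro a _
      apply Finset.sum_congr rfl
      intro b _
      push_cast
      ring_nf
    rw [Finset.sum_congr rfl e1, Finset.sum_comm]
    have e2 : ∀ a ∈ Finset.range q.toNat,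
        (∑ k ∈ Finset.range q.toNat, ∑ b ∈ Finset.range q.toNat,
            sawR q a * sawR q b *
              (Real.sin (2*π*((a:ℕ):ℝ)*(k:ℝ)/(q:ℝ)) * Real.sin (2*π*((p*(b:ℕ):ℤ):ℝ)*(k:ℝ)/(q:ℝ))))
        = ∑ b ∈ Finset.range q.toNat, sawR q a * sawR q b *
            (((if q ∣ ((a:ℤ) - p*b) then (q:ℝ) else 0) - (if q ∣ ((a:ℤ) + p*b) then (q:ℝ) else 0))/2) := by
      intro a _
      rw [Finset.sum_comm]
      apply Finset.sum_congr rfl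
      intro b _
      rw [← Finset.mul_sum]
      congr 1
      have key := sum_sin_mul_sin hn ((a:ℕ):ℤ) (p*((b:ℕ):ℤ))
      rw [hnq] at key  -- fix dvd conditions
      rw [hnR] at key
      rw [← key]
      apply Finset.sum_congr rfl
      intro k _
      norm_cast
    rw [Finset.sum_congr rfl e2, Finset.sum_comm]
    have e3 : ∀ b ∈ Finset.range q.toNat,
        (∑ a ∈ Finset.range q.toNat, sawR q a * sawR q b *
            (((if q ∣ ((a:ℤ) - p*b) then (q:ℝ) else 0) - (if q ∣ ((a:ℤ) + p*b) then (q:ℝ) else 0))/2))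
        = (q:ℝ) * (sawR q b * sawR q (p*b)) := by
      intro b _
      have hs1 := sift hq (p*(b:ℤ))
      have hs2 := sift hq (-(p*(b:ℤ)))
      rw [sawR_neg] at hs2
      have expand : ∀ a : ℕ, sawR q a * sawR q b *
            (((if q ∣ ((a:ℤ) - p*b) then (q:ℝ) else 0) - (if q ∣ ((a:ℤ) + p*b) then (q:ℝ) else 0))/2)
          = sawR q b/2 * (sawR q a * (if q ∣ ((a:ℤ) - p*b) then (q:ℝ) else 0))
            - sawR q b/2 * (sawR q a * (if q ∣ ((a:ℤ) - -(p*b)) then (q:ℝ) else 0)) := by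
        intro a
        rw [show (a:ℤ) - -(p*(b:ℤ)) = (a:ℤ) + p*b by ring]
        ring
      simp only [expand]
      rw [Finset.sum_sub_distrib, ← Finset.mul_sum, ← Finset.mul_sum, hs1, hs2]
      ring
    rw [Finset.sum_congr rfl e3, ← Finset.mul_sum]
  -- assemble
  rw [hLHS, hC, show (∑ k ∈ Finset.range q.toNat, 4 * G k) = 4 * ∑ k ∈ Finset.range q.toNat, G k
      from (Finset.mul_sum _ _ _).symm, hD]
  field_simp
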